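/- Let v = |100⟩+|010⟩+|001⟩ ∈ (ℂ²)⊗³ and let k = span(v) & (ℂ²⊗ℂ²⊗span(|0⟩)) be the Sasaki projection of span(v) onto the subspace where the third qubit is |0⟩. Then k = span(|100⟩ + |010⟩). -/

import Mathlib

noncomputable section

open scoped InnerProductSpace

/-- The qubit space ℂ². -/
abbrev Qubit : Type := EuclideanSpace ℂ (Fin 2)

/-- Two-qubit space, modelling ℂ² ⊗ ℂ². -/
abbrev Qubit2 : Type := EuclideanSpace ℂ (Fin 2 × Fin 2)

/-- Three-qubit space, modelling ℂ² ⊗ ℂ² ⊗ ℂ². -/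
abbrev Qubit3 : Type := EuclideanSpace ℂ (Fin 2 × Fin 2 × Fin 2)

/-- Standard basis vector `|i⟩` of ℂ². -/
def e (i : Fin 2) : Qubit := EuclideanSpace.single i 1

/-- The tensor product of two qubit vectors. -/
def tp (v w : Qubit) : Qubit2 := WithLp.toLp 2 (fun p : Fin 2 × Fin 2 => v p.1 * w p.2)

/-- The tensor product of three qubit vectors. -/
def tp3 (u v w : Qubit) : Qubit3 :=
  WithLp.toLp 2 (fun q : Fin 2 × Fin 2 × Fin 2 => u q.1 * v q.2.1 * w q.2.2)

/-- For a subspace `P` of ℂ²⊗ℂ², the subspace `P ⊗ ℂ²` of ℂ²⊗ℂ²⊗ℂ²: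
the span of all simple tensors `p ⊗ w` with `p ∈ P`, `w ∈ ℂ²`. -/
def tensExt (P : Submodule ℂ Qubit2) : Submodule ℂ Qubit3 :=
  Submodule.span ℂ
    {x : Qubit3 | ∃ p ∈ P, ∃ w : Qubit, x = WithLp.toLp 2 (fun q : Fin 2 × Fin 2 × Fin 2 => p (q.1, q.2.1) * w q.2.2)}

lemma tp3_e (a b c : Fin 2) : tp3 (e a) (e b) (e c) = EuclideanSpace.single (a,b,c) (1:ℂ) := by
  ext q
  obtain ⟨x, y, z⟩ := q
  simp only [tp3, e, PiLp.toLp_apply, EuclideanSpace.single_apply, Prod.mk.injEq]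
  by_cases h1 : x = a <;> by_cases h2 : y = b <;> by_cases h3 : z = c <;>
    simp [h1, h2, h3]

/-- With v = |100⟩+|010⟩+|001⟩, the Sasaki projection of span(v) onto
ℂ²⊗ℂ²⊗span(|0⟩) is span{|100⟩ + |010⟩}. -/
theorem sasaki_third_qubit_zero :
    let v : Qubit3 := tp3 (e 1) (e 0) (e 0) + tp3 (e 0) (e 1) (e 0) + tp3 (e 0) (e 0) (e 1)
    let Q : Submodule ℂ Qubit3 := Submodule.span ℂ
      {tp3 (e 0) (e 0) (e 0), tp3 (e 0) (e 1) (e 0),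
       tp3 (e 1) (e 0) (e 0), tp3 (e 1) (e 1) (e 0)}
    Q ⊓ (Submodule.span ℂ {v} ⊔ Qᗮ) =
      Submodule.span ℂ {tp3 (e 1) (e 0) (e 0) + tp3 (e 0) (e 1) (e 0)} := by
  intro v Q
  set z : Qubit3 := tp3 (e 0) (e 0) (e 1) with hzdef
  set u : Qubit3 := tp3 (e 1) (e 0) (e 0) + tp3 (e 0) (e 1) (e 0) with hudef
  have hz : z ∈ Qᗮ := by
    rw [Submodule.mem_orthogonal]
    intro w hw
    induction hw using Submodule.span_induction with
    | mem x hx =>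
      rcases hx with rfl | rfl | rfl | rfl <;>
        · rw [hzdef, tp3_e, tp3_e]
          simp [EuclideanSpace.inner_single_left, EuclideanSpace.single_apply]
    | zero => simp
    | add _ _ _ _ h1 h2 => simp [inner_add_left, h1, h2]
    | smul a _ _ h => simp [inner_smul_left, h]
  have huQ : u ∈ Q := by
    refine add_mem (Submodule.subset_span ?_) (Submodule.subset_span ?_) <;> simp
  have hvuz : v = u + z := by rw [hudef, hzdef]
  apply le_antisymm
  · rintro x ⟨hxQ, hxsup⟩
    rcases Submodule.mem_sup.mp hxsup with ⟨s, hs, w, hw, rfl⟩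
    rcases Submodule.mem_span_singleton.mp hs with ⟨a, rfl⟩
    have hy : a • v + w - a • u = a • z + w := by rw [hvuz]; module
    have hyQ : a • v + w - a • u ∈ Q := sub_mem hxQ (Submodule.smul_mem _ _ huQ)
    have hyO : a • v + w - a • u ∈ Qᗮ := by
      rw [hy]; exact add_mem (Submodule.smul_mem _ _ hz) hw
    have hy0 : a • v + w - a • u = 0 := by
      have := (Submodule.orthogonal_disjoint Q).le_bot ⟨hyQ, hyO⟩
      simpa using this
    have : a • v + w = a • u := by linear_combination (norm := module) hy0
    rw [this]
    exact Submodule.smul_mem _ _ (Submodule.mem_span_singleton_self u)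
  · rw [Submodule.span_le, Set.singleton_subset_iff]
    refine ⟨huQ, Submodule.mem_sup.mpr ⟨v, Submodule.mem_span_singleton_self v, -z, neg_mem hz, ?_⟩⟩
    rw [hvuz]; abel
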